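/- arXiv:2404.16961 — 4 statements merged into one kernel-verified Lean document; each statement's English description precedes it below -/
import Mathlib

section
/- Suppose the common trend assumption holds, i.e. E[Y_1(0) − Y_0(0) | D=1] = E[Y_1(0) − Y_0(0) | D=0], and the no-anticipation assumption holds, i.e. Y_0(1) = Y_0(0) almost surely. Then the average treatment effect on the treated satisfies E[Y_1(1) − Y_1(0) | D=1] = (E[Y_1 | D=1] − E[Y_0 | D=1]) − (E[Y_1 | D=0] − E[Y_0 | D=0]), i.e. the ATET is identified by the difference-in-differences of observed mean outcomes. -/
open MeasureTheory ProbabilityTheory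

lemma integrable_cond_aux {Ω : Type*} [MeasurableSpace Ω] {μ : Measure Ω}
    {s : Set Ω} (hs : μ s ≠ 0) {f : Ω → ℝ} (hf : Integrable f μ) :
    Integrable f (μ[|s]) := by
  rw [ProbabilityTheory.cond]
  exact (hf.restrict).smul_measure (ENNReal.inv_ne_top.2 hs)

lemma ae_cond_of_forall_mem {Ω : Type*} [MeasurableSpace Ω] {μ : Measure Ω}
    {s : Set Ω} (hs : MeasurableSet s) {p : Ω → Prop} (h : ∀ ω ∈ s, p ω) :
    ∀ᵐ ω ∂(μ[|s]), p ω := by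
  rw [ProbabilityTheory.cond]
  exact Measure.ae_smul_measure (ae_restrict_of_forall_mem hs h) _

/-- Under common trends and no anticipation, the ATET is identified by the
difference-in-differences of observed mean outcomes. -/
theorem did_identifies_atet
    {Ω : Type*} [MeasurableSpace Ω] (μ : Measure Ω) [IsProbabilityMeasure μ]
    (D Y0d0 Y0d1 Y1d0 Y1d1 Y0 Y1 : Ω → ℝ)
    (hDmeas : Measurable D)
    (hDbin : ∀ ω, D ω = 0 ∨ D ω = 1)
    (hD1pos : 0 < μ {ω | D ω = 1})
    (hD1lt : μ {ω | D ω = 1} < 1)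
    (hY0d0int : Integrable Y0d0 μ) (hY0d1int : Integrable Y0d1 μ)
    (hY1d0int : Integrable Y1d0 μ) (hY1d1int : Integrable Y1d1 μ)
    (hY0 : ∀ ω, Y0 ω = D ω * Y0d1 ω + (1 - D ω) * Y0d0 ω)
    (hY1 : ∀ ω, Y1 ω = D ω * Y1d1 ω + (1 - D ω) * Y1d0 ω)
    -- common trend assumption
    (hCT : ∫ ω, (Y1d0 ω - Y0d0 ω) ∂(μ[|{ω | D ω = 1}]) =
           ∫ ω, (Y1d0 ω - Y0d0 ω) ∂(μ[|{ω | D ω = 0}]))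
    -- no anticipation assumption
    (hNA : Y0d1 =ᵐ[μ] Y0d0) :
    ∫ ω, (Y1d1 ω - Y1d0 ω) ∂(μ[|{ω | D ω = 1}]) =
      (∫ ω, Y1 ω ∂(μ[|{ω | D ω = 1}]) - ∫ ω, Y0 ω ∂(μ[|{ω | D ω = 1}])) -
      (∫ ω, Y1 ω ∂(μ[|{ω | D ω = 0}]) - ∫ ω, Y0 ω ∂(μ[|{ω | D ω = 0}])) := by
  set A := {ω | D ω = 1} with hA
  set B := {ω | D ω = 0} with hB
  have hAmeas : MeasurableSet A := hDmeas (measurableSet_singleton 1)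
  have hBmeas : MeasurableSet B := hDmeas (measurableSet_singleton 0)
  have hAne : μ A ≠ 0 := hD1pos.ne'
  have hBne : μ B ≠ 0 := by
    intro h0
    have hUnion : A ∪ B = Set.univ := by
      ext ω; simp [hA, hB]; rcases hDbin ω with h | h <;> simp [h]
    have : (1 : ENNReal) ≤ μ A := by
      calc (1 : ENNReal) = μ Set.univ := (measure_univ).symm
        _ = μ (A ∪ B) := by rw [hUnion]
        _ ≤ μ A + μ B := measure_union_le _ _
        _ = μ A := by rw [h0, add_zero]
    exact absurd this (not_le.2 hD1lt)
  -- a.e. equalities under the conditional measures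
  have hNA_A : Y0d1 =ᵐ[μ[|A]] Y0d0 := cond_absolutelyContinuous.ae_eq hNA
  have hY1A : Y1 =ᵐ[μ[|A]] Y1d1 :=
    _root_.ae_cond_of_forall_mem hAmeas (fun ω hω => by
      have : D ω = 1 := hω
      simp [hY1 ω, this])
  have hY0A : Y0 =ᵐ[μ[|A]] Y0d0 := by
    have h1 : Y0 =ᵐ[μ[|A]] Y0d1 :=
      _root_.ae_cond_of_forall_mem hAmeas (fun ω hω => by
        have : D ω = 1 := hω
        simp [hY0 ω, this])
    exact h1.trans hNA_A
  have hY1B : Y1 =ᵐ[μ[|B]] Y1d0 :=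
    _root_.ae_cond_of_forall_mem hBmeas (fun ω hω => by
      have : D ω = 0 := hω
      simp [hY1 ω, this])
  have hY0B : Y0 =ᵐ[μ[|B]] Y0d0 :=
    _root_.ae_cond_of_forall_mem hBmeas (fun ω hω => by
      have : D ω = 0 := hω
      simp [hY0 ω, this])
  -- rewrite the observed integrals
  rw [integral_congr_ae hY1A, integral_congr_ae hY0A,
    integral_congr_ae hY1B, integral_congr_ae hY0B]
  -- split the difference integrals
  have hsplit1 : ∫ ω, (Y1d1 ω - Y1d0 ω) ∂(μ[|A]) =
      ∫ ω, Y1d1 ω ∂(μ[|A]) - ∫ ω, Y1d0 ω ∂(μ[|A]) :=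
    integral_sub (integrable_cond_aux hAne hY1d1int) (integrable_cond_aux hAne hY1d0int)
  have hsplit2 : ∫ ω, (Y1d0 ω - Y0d0 ω) ∂(μ[|A]) =
      ∫ ω, Y1d0 ω ∂(μ[|A]) - ∫ ω, Y0d0 ω ∂(μ[|A]) :=
    integral_sub (integrable_cond_aux hAne hY1d0int) (integrable_cond_aux hAne hY0d0int)
  have hsplit3 : ∫ ω, (Y1d0 ω - Y0d0 ω) ∂(μ[|B]) =
      ∫ ω, Y1d0 ω ∂(μ[|B]) - ∫ ω, Y0d0 ω ∂(μ[|B]) :=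
    integral_sub (integrable_cond_aux hBne hY1d0int) (integrable_cond_aux hBne hY0d0int)
  rw [hsplit1]
  rw [hsplit2, hsplit3] at hCT
  linarith
end

section
/- Suppose the common trend assumption E[Y_1(0) − Y_0(0) | D=1] = E[Y_1(0) − Y_0(0) | D=0] holds, the common trend across matched groups assumption E[ E[Y_1(0) − Y_0(0) | Y_0, D=0] | D=1 ] = E[Y_1(0) − Y_0(0) | D=1] holds, and the no-anticipation assumption Y_0(1) = Y_0(0) almost surely holds. Then the testable implication E[ E[Y_1 − Y_0 | Y_0, D=0] | D=1 ] = E[Y_1 − Y_0 | D=0] holds, where the inner conditional expectation denotes (a version of) the conditional expectation of Y_1 − Y_0 given σ(Y_0) under the conditional probability measure P(· | D=0), evaluated and then averaged over the distribution of Y_0 given D=1. -/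
open MeasureTheory ProbabilityTheory

/-- Under the common trend assumption, the common trend across matched groups
assumption, and no anticipation, the testable implication
`E[E[Y₁ − Y₀ | Y₀, D=0] | D=1] = E[Y₁ − Y₀ | D=0]` holds. -/
theorem matched_control_testable_implication
    {Ω : Type*} [MeasurableSpace Ω] (μ : Measure Ω) [IsProbabilityMeasure μ]
    (D Y0d0 Y0d1 Y1d0 Y1d1 Y0 Y1 : Ω → ℝ)
    (hDmeas : Measurable D)
    (hDbin : ∀ ω, D ω = 0 ∨ D ω = 1)
    (hD1pos : 0 < μ {ω | D ω = 1})
    (hD1lt : μ {ω | D ω = 1} < 1)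
    (hY0meas : Measurable Y0)
    (hY0d0int : Integrable Y0d0 μ) (hY0d1int : Integrable Y0d1 μ)
    (hY1d0int : Integrable Y1d0 μ) (hY1d1int : Integrable Y1d1 μ)
    -- observational rule
    (hY0 : ∀ ω, Y0 ω = D ω * Y0d1 ω + (1 - D ω) * Y0d0 ω)
    (hY1 : ∀ ω, Y1 ω = D ω * Y1d1 ω + (1 - D ω) * Y1d0 ω)
    -- no anticipation assumption
    (hNA : Y0d1 =ᵐ[μ] Y0d0)
    -- m is (a version of) E[Y₁(0) − Y₀(0) | Y₀, D = 0], and hence also of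
    -- E[Y₁ − Y₀ | Y₀, D = 0], as a measurable function of Y₀
    (m : ℝ → ℝ) (hm : Measurable m)
    (hmPot : (fun ω => m (Y0 ω)) =ᵐ[μ[|{ω | D ω = 0}]]
      MeasureTheory.condExp (MeasurableSpace.comap Y0 inferInstance)
        (μ[|{ω | D ω = 0}]) (fun ω => Y1d0 ω - Y0d0 ω))
    (hmObs : (fun ω => m (Y0 ω)) =ᵐ[μ[|{ω | D ω = 0}]]
      MeasureTheory.condExp (MeasurableSpace.comap Y0 inferInstance)
        (μ[|{ω | D ω = 0}]) (fun ω => Y1 ω - Y0 ω))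
    -- m (Y₀) is integrable under P(·|D=1)
    (hmInt : Integrable (fun ω => m (Y0 ω)) (μ[|{ω | D ω = 1}]))
    -- common support: P(D=1|Y₀) < 1 almost surely
    (p : ℝ → ℝ) (hp : Measurable p)
    (hpVer : (fun ω => p (Y0 ω)) =ᵐ[μ]
      MeasureTheory.condExp (MeasurableSpace.comap Y0 inferInstance) μ D)
    (hCS : ∀ᵐ ω ∂μ, p (Y0 ω) < 1)
    -- common trend assumption (Assumption 1)
    (hCT : ∫ ω, (Y1d0 ω - Y0d0 ω) ∂(μ[|{ω | D ω = 1}]) =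
           ∫ ω, (Y1d0 ω - Y0d0 ω) ∂(μ[|{ω | D ω = 0}]))
    -- common trend across matched groups (Assumption 4)
    (hMatch : ∫ ω, m (Y0 ω) ∂(μ[|{ω | D ω = 1}]) =
              ∫ ω, (Y1d0 ω - Y0d0 ω) ∂(μ[|{ω | D ω = 1}])) :
    ∫ ω, m (Y0 ω) ∂(μ[|{ω | D ω = 1}]) =
      ∫ ω, (Y1 ω - Y0 ω) ∂(μ[|{ω | D ω = 0}]) := by
  rw [hMatch, hCT]
  refine integral_congr_ae ?_
  have hs : MeasurableSet {ω | D ω = 0} := hDmeas (measurableSet_singleton 0)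
  rw [ProbabilityTheory.cond]
  refine Measure.ae_smul_measure ?_ _
  refine (ae_restrict_iff' hs).2 ?_
  refine Filter.Eventually.of_forall fun ω hω => ?_
  simp only [Set.mem_setOf_eq] at hω
  simp [hY0 ω, hY1 ω, hω]
end

section
/- In the non-separable model Y_t(0) = α_t·U + U for t ∈ {0,1} with real constants α_0 ≠ −1 and α_1, and integrable real random variable U, the pre-treatment potential outcome satisfies Y_0(0) = (1 + α_0)·U, and the conditional trend satisfies E[Y_1(0) − Y_0(0) | Y_0(0)] = ((α_1 − α_0)/(1 + α_0))·Y_0(0) almost surely. Hence, if α_1 ≠ α_0 and U is not almost surely constant, then E[Y_1(0) − Y_0(0) | Y_0(0)] ≠ E[Y_1(0) − Y_0(0)] with positive probability, i.e. the common trend assumption across pre-treatment outcomes (Assumption 5) is violated. -/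
open MeasureTheory ProbabilityTheory

/-- In the non-separable model `Y_t(0) = α_t U + U` with `α₀ ≠ −1`, the conditional
trend given the pre-treatment potential outcome is linear in `Y₀(0)`; hence if
`α₁ ≠ α₀` and `U` is not almost surely constant, Assumption 5 (common trends across
pre-treatment outcomes) is violated with positive probability. -/
theorem nonseparable_model_conditional_trend
    {Ω : Type*} [MeasurableSpace Ω] (μ : Measure Ω) [IsProbabilityMeasure μ]
    (α0 α1 : ℝ) (hα0 : α0 ≠ -1) (U : Ω → ℝ)
    (hUmeas : Measurable U) (hUint : Integrable U μ)
    (Y0p Y1p : Ω → ℝ)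
    (hY0p : ∀ ω, Y0p ω = α0 * U ω + U ω)
    (hY1p : ∀ ω, Y1p ω = α1 * U ω + U ω) :
    -- Y₀(0) = (1 + α₀)·U
    (∀ ω : Ω, Y0p ω = (1 + α0) * U ω)
    -- E[Y₁(0) − Y₀(0) | Y₀(0)] = ((α₁ − α₀)/(1 + α₀))·Y₀(0) almost surely
    ∧ (MeasureTheory.condExp (MeasurableSpace.comap Y0p inferInstance) μ
        (fun ω => Y1p ω - Y0p ω) =ᵐ[μ]
        fun ω => ((α1 - α0) / (1 + α0)) * Y0p ω)
    -- violation of Assumption 5 with positive probability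
    ∧ (α1 ≠ α0 → (¬ ∃ c : ℝ, U =ᵐ[μ] fun _ => c) →
        0 < μ {ω | MeasureTheory.condExp (MeasurableSpace.comap Y0p inferInstance) μ
          (fun ω' => Y1p ω' - Y0p ω') ω ≠ ∫ ω', (Y1p ω' - Y0p ω') ∂μ}) := by
  have hne : (1 + α0) ≠ 0 := fun h => hα0 (by linarith)
  have h1 : ∀ ω : Ω, Y0p ω = (1 + α0) * U ω := by
    intro ω; rw [hY0p]; ring
  set c : ℝ := (α1 - α0) / (1 + α0) with hc
  have hdiff : (fun ω => Y1p ω - Y0p ω) = fun ω => c * Y0p ω := by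
    funext ω
    rw [hY1p, h1, hc]
    field_simp
    ring
  have hY0eq : Y0p = fun ω => (1 + α0) * U ω := funext h1
  have hY0meas : Measurable Y0p := by
    rw [hY0eq]; exact hUmeas.const_mul _
  have hY0int : Integrable Y0p μ := by
    rw [hY0eq]; exact hUint.const_mul _
  have hm : MeasurableSpace.comap Y0p inferInstance ≤ ‹MeasurableSpace Ω› :=
    hY0meas.comap_le
  have hY0m : Measurable[MeasurableSpace.comap Y0p inferInstance] Y0p :=
    Measurable.of_comap_le le_rfl
  have hce : MeasureTheory.condExp (MeasurableSpace.comap Y0p inferInstance) μ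
      (fun ω => Y1p ω - Y0p ω) = fun ω => c * Y0p ω := by
    rw [hdiff]
    exact condExp_of_stronglyMeasurable hm
      ((hY0m.const_mul c).stronglyMeasurable) (hY0int.const_mul c)
  refine ⟨h1, by rw [hce], ?_⟩
  intro hne2 hUc
  rw [pos_iff_ne_zero]
  intro h0
  have hae : ∀ᵐ ω ∂μ, MeasureTheory.condExp (MeasurableSpace.comap Y0p inferInstance) μ
      (fun ω' => Y1p ω' - Y0p ω') ω = ∫ ω', (Y1p ω' - Y0p ω') ∂μ := by
    rw [ae_iff]
    exact h0
  have hcne : c ≠ 0 := div_ne_zero (sub_ne_zero.mpr hne2) hne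
  apply hUc
  refine ⟨(∫ ω', (Y1p ω' - Y0p ω') ∂μ) / c / (1 + α0), ?_⟩
  filter_upwards [hae] with ω hω
  rw [hce] at hω
  have : Y0p ω = (∫ ω', (Y1p ω' - Y0p ω') ∂μ) / c := by
    field_simp at hω ⊢
    linarith [hω]
  rw [h1] at this
  field_simp at this ⊢
  linarith [this]
end

section
/- Doubly robust representation of the test statistic: let μ(Y_0, X) be a version of E[Y_1 − Y_0 | Y_0, X, D=0], μ(X) a version of E[Y_1 − Y_0 | X, D=0], p(Y_0, X) = P(D=1 | Y_0, X), and p(X) = P(D=1 | X), and assume p(Y_0, X) < 1 almost surely and all displayed quantities are integrable. Then: (i) E[μ(Y_0,X)·D] / P(D=1) = E[μ(Y_0,X) | D=1] and E[μ(X)·D] / P(D=1) = E[μ(X) | D=1]; (ii) E[ (Y_1 − Y_0 − μ(Y_0,X))·(1−D)·p(Y_0,X) / (1 − p(Y_0,X)) ] = 0 and E[ (Y_1 − Y_0 − μ(X))·(1−D)·p(X) / (1 − p(X)) ] = 0; consequently (iii) θ := E[ μ(Y_0,X)·D/P(D=1) + (Y_1 − Y_0 − μ(Y_0,X))·(1−D)·p(Y_0,X)/((1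 − p(Y_0,X))·P(D=1)) ] − E[ μ(X)·D/P(D=1) + (Y_1 − Y_0 − μ(X))·(1−D)·p(X)/((1 − p(X))·P(D=1)) ] equals E[μ(Y_0,X) | D=1] − E[μ(X) | D=1]. -/
open MeasureTheory ProbabilityTheory

lemma my_integral_cond {Ω : Type*} [MeasurableSpace Ω] (μ : Measure Ω)
    (A : Set Ω) (f : Ω → ℝ) :
    ∫ ω, f ω ∂(μ[|A]) = ((μ A)⁻¹).toReal * ∫ ω in A, f ω ∂μ := by
  rw [ProbabilityTheory.cond, integral_smul_measure, smul_eq_mul]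

lemma my_aux_zero {Ω : Type*} {m m0 : MeasurableSpace Ω} (hm : m ≤ m0)
    (ν : @Measure Ω m0) [IsProbabilityMeasure ν]
    (f g h : Ω → ℝ)
    (hf : StronglyMeasurable[m] f)
    (hgm : StronglyMeasurable[m] g)
    (hg_eq : g =ᵐ[ν] MeasureTheory.condExp m ν h)
    (hh : Integrable h ν)
    (hfg : Integrable (fun ω => f ω * (h ω - g ω)) ν) :
    ∫ ω, f ω * (h ω - g ω) ∂ν = 0 := by
  have hg_int : Integrable g ν := (integrable_condExp).congr hg_eq.symm
  have hhg : Integrable (h - g) ν := hh.sub hg_int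
  have hfg' : Integrable (f * (h - g)) ν := hfg
  have h0 : MeasureTheory.condExp m ν (h - g) =ᵐ[ν] 0 := by
    filter_upwards [condExp_sub (μ := ν) (m := m) hh hg_int, hg_eq] with ω hω hω2
    rw [Pi.zero_apply, hω, Pi.sub_apply,
      condExp_of_stronglyMeasurable hm hgm hg_int, ← hω2, sub_self]
  have hpull := condExp_mul_of_stronglyMeasurable_left (μ := ν) hf hfg' hhg
  have key : (fun ω => f ω * (h ω - g ω)) = f * (h - g) := rfl
  rw [key]
  calc ∫ ω, (f * (h - g)) ω ∂ν
      = ∫ ω, MeasureTheory.condExp m ν (f * (h - g)) ω ∂ν :=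
        (integral_condExp hm).symm
    _ = 0 := by
        rw [integral_congr_ae hpull]
        have h2 : (f * MeasureTheory.condExp m ν (h - g)) =ᵐ[ν] fun _ => (0 : ℝ) := by
          filter_upwards [h0] with ω hω
          simp only [Pi.mul_apply, Pi.zero_apply] at *
          rw [hω, mul_zero]
        rw [integral_congr_ae h2, integral_zero]

lemma my_part_ii {Ω : Type*} {m m0 : MeasurableSpace Ω} (hm : m ≤ m0)
    (μ : @Measure Ω m0) [IsProbabilityMeasure μ]
    (D : Ω → ℝ) (hDmeas : Measurable D) (hDbin : ∀ ω, D ω = 0 ∨ D ω = 1)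
    (hD1lt : μ {ω | D ω = 1} < 1)
    (h g p : Ω → ℝ)
    (hgm : Measurable[m] g) (hpm : Measurable[m] p)
    (hg_eq : g =ᵐ[μ[|{ω | D ω = 0}]] MeasureTheory.condExp m (μ[|{ω | D ω = 0}]) h)
    (hh : Integrable h μ)
    (hint : Integrable (fun ω => (h ω - g ω) * (1 - D ω) * p ω / (1 - p ω)) μ) :
    ∫ ω, (h ω - g ω) * (1 - D ω) * p ω / (1 - p ω) ∂μ = 0 := by
  set A : Set Ω := {ω | D ω = 0} with hA_def
  have hS : MeasurableSet {ω | D ω = 1} := hDmeas (measurableSet_singleton 1)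
  have hA : MeasurableSet A := hDmeas (measurableSet_singleton 0)
  have hAc : A = {ω | D ω = 1}ᶜ := by
    ext ω
    rcases hDbin ω with h0 | h1
    · simp [hA_def, h0]
    · simp [hA_def, h1]
  have hA0 : μ A ≠ 0 := by
    rw [hAc, prob_compl_eq_one_sub hS]
    intro hc
    exact absurd (tsub_eq_zero_iff_le.mp hc) (not_le.mpr hD1lt)
  have hAtop : (μ A)⁻¹ ≠ ⊤ := ENNReal.inv_ne_top.mpr hA0
  set ν : Measure Ω := μ[|A] with hν_def
  haveI : IsProbabilityMeasure ν := cond_isProbabilityMeasure hA0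
  have cond_int : ∀ (φ : Ω → ℝ), Integrable φ (μ.restrict A) → Integrable φ ν := by
    intro φ hφ
    rw [hν_def, ProbabilityTheory.cond]
    exact hφ.smul_measure hAtop
  set f : Ω → ℝ := fun ω => p ω / (1 - p ω) with hf_def
  have hf : StronglyMeasurable[m] f :=
    (hpm.div (measurable_const.sub hpm)).stronglyMeasurable
  -- pointwise identity on A
  have e1 : ∀ ω ∈ A, (h ω - g ω) * (1 - D ω) * p ω / (1 - p ω) = f ω * (h ω - g ω) := by
    intro ω hω
    have hω0 : D ω = 0 := hω
    simp only [hf_def, hω0, sub_zero, mul_one, div_eq_mul_inv]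
    ring
  have hh_ν : Integrable h ν := cond_int h hh.restrict
  have hfg : Integrable (fun ω => f ω * (h ω - g ω)) ν := by
    refine cond_int _ (hint.restrict.congr ?_)
    filter_upwards [ae_restrict_mem hA] with ω hω
    exact e1 ω hω
  have hzero : ∫ ω, f ω * (h ω - g ω) ∂ν = 0 :=
    my_aux_zero hm ν f g h hf hgm.stronglyMeasurable hg_eq hh_ν hfg
  -- relate the μ-integral to the ν-integral
  have eInd : ∀ ω, (h ω - g ω) * (1 - D ω) * p ω / (1 - p ω)
      = A.indicator (fun ω => f ω * (h ω - g ω)) ω := by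
    intro ω
    rcases hDbin ω with h0 | h1
    · have hωA : ω ∈ A := h0
      rw [Set.indicator_of_mem hωA]
      exact e1 ω hωA
    · have hωA : ω ∉ A := by simp [hA_def, h1]
      rw [Set.indicator_of_notMem hωA, h1]
      simp
  have hcond := my_integral_cond μ A (fun ω => f ω * (h ω - g ω))
  rw [← hν_def, hzero] at hcond
  have htoReal : ((μ A)⁻¹).toReal ≠ 0 := by
    simp only [ne_eq, ENNReal.toReal_eq_zero_iff]
    push_neg
    exact ⟨ENNReal.inv_ne_zero.mpr (measure_ne_top μ A), hAtop⟩
  have hsetint : ∫ ω in A, f ω * (h ω - g ω) ∂μ = 0 := by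
    rcases mul_eq_zero.mp hcond.symm with hc | hc
    · exact absurd hc htoReal
    · exact hc
  calc ∫ ω, (h ω - g ω) * (1 - D ω) * p ω / (1 - p ω) ∂μ
      = ∫ ω, A.indicator (fun ω => f ω * (h ω - g ω)) ω ∂μ := by
        exact integral_congr_ae (Filter.Eventually.of_forall eInd)
    _ = ∫ ω in A, f ω * (h ω - g ω) ∂μ := integral_indicator hA
    _ = 0 := hsetint

/-- Doubly robust representation of the test statistic: the DR moment `θ` equals
`E[μ(Y₀,X) | D=1] − E[μ(X) | D=1]`. -/
theorem doubly_robust_representation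
    {Ω 𝓧 : Type*} [MeasurableSpace Ω] [MeasurableSpace 𝓧]
    (μ : Measure Ω) [IsProbabilityMeasure μ]
    (D Y0 Y1 : Ω → ℝ) (X : Ω → 𝓧)
    (hDmeas : Measurable D) (hXmeas : Measurable X) (hY0meas : Measurable Y0)
    (hDbin : ∀ ω, D ω = 0 ∨ D ω = 1)
    (hD1pos : 0 < μ {ω | D ω = 1})
    (hD1lt : μ {ω | D ω = 1} < 1)
    (hY0int : Integrable Y0 μ) (hY1int : Integrable Y1 μ)
    -- muYX is a version of E[Y₁ − Y₀ | Y₀, X, D=0]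
    (muYX : ℝ × 𝓧 → ℝ) (hmuYXmeas : Measurable muYX)
    (hmuYX : (fun ω => muYX (Y0 ω, X ω)) =ᵐ[μ[|{ω | D ω = 0}]]
      MeasureTheory.condExp
        (MeasurableSpace.comap (fun ω => (Y0 ω, X ω)) inferInstance)
        (μ[|{ω | D ω = 0}]) (fun ω => Y1 ω - Y0 ω))
    -- muX is a version of E[Y₁ − Y₀ | X, D=0]
    (muX : 𝓧 → ℝ) (hmuXmeas : Measurable muX)
    (hmuX : (fun ω => muX (X ω)) =ᵐ[μ[|{ω | D ω = 0}]]
      MeasureTheory.condExp (MeasurableSpace.comap X inferInstance)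
        (μ[|{ω | D ω = 0}]) (fun ω => Y1 ω - Y0 ω))
    -- pYX is a version of the propensity score P(D=1 | Y₀, X)
    (pYX : ℝ × 𝓧 → ℝ) (hpYXmeas : Measurable pYX)
    (hpYX : (fun ω => pYX (Y0 ω, X ω)) =ᵐ[μ]
      MeasureTheory.condExp
        (MeasurableSpace.comap (fun ω => (Y0 ω, X ω)) inferInstance) μ D)
    -- pX is a version of the propensity score P(D=1 | X)
    (pX : 𝓧 → ℝ) (hpXmeas : Measurable pX)
    (hpX : (fun ω => pX (X ω)) =ᵐ[μ]
      MeasureTheory.condExp (MeasurableSpace.comap X inferInstance) μ D)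
    -- common support: p(Y₀, X) < 1 almost surely
    (hCS : ∀ᵐ ω ∂μ, pYX (Y0 ω, X ω) < 1)
    -- integrability of all displayed quantities
    (hint1 : Integrable (fun ω => muYX (Y0 ω, X ω) * D ω) μ)
    (hint2 : Integrable (fun ω => muX (X ω) * D ω) μ)
    (hint3 : Integrable (fun ω => muYX (Y0 ω, X ω)) (μ[|{ω | D ω = 1}]))
    (hint4 : Integrable (fun ω => muX (X ω)) (μ[|{ω | D ω = 1}]))
    (hint5 : Integrable (fun ω => (Y1 ω - Y0 ω - muYX (Y0 ω, X ω)) * (1 - D ω) *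
      pYX (Y0 ω, X ω) / (1 - pYX (Y0 ω, X ω))) μ)
    (hint6 : Integrable (fun ω => (Y1 ω - Y0 ω - muX (X ω)) * (1 - D ω) *
      pX (X ω) / (1 - pX (X ω))) μ) :
    -- (i) normalized treated moments equal conditional means given D=1
    ((∫ ω, muYX (Y0 ω, X ω) * D ω ∂μ) / (μ {ω | D ω = 1}).toReal =
      ∫ ω, muYX (Y0 ω, X ω) ∂(μ[|{ω | D ω = 1}]))
    ∧ ((∫ ω, muX (X ω) * D ω ∂μ) / (μ {ω | D ω = 1}).toReal =
      ∫ ω, muX (X ω) ∂(μ[|{ω | D ω = 1}]))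
    -- (ii) the augmentation terms have mean zero
    ∧ (∫ ω, (Y1 ω - Y0 ω - muYX (Y0 ω, X ω)) * (1 - D ω) *
        pYX (Y0 ω, X ω) / (1 - pYX (Y0 ω, X ω)) ∂μ = 0)
    ∧ (∫ ω, (Y1 ω - Y0 ω - muX (X ω)) * (1 - D ω) *
        pX (X ω) / (1 - pX (X ω)) ∂μ = 0)
    -- (iii) θ equals E[μ(Y₀,X) | D=1] − E[μ(X) | D=1]
    ∧ ((∫ ω, (muYX (Y0 ω, X ω) * D ω / (μ {ω | D ω = 1}).toReal +
          (Y1 ω - Y0 ω - muYX (Y0 ω, X ω)) * (1 - D ω) * pYX (Y0 ω, X ω) /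
            ((1 - pYX (Y0 ω, X ω)) * (μ {ω | D ω = 1}).toReal)) ∂μ) -
        (∫ ω, (muX (X ω) * D ω / (μ {ω | D ω = 1}).toReal +
          (Y1 ω - Y0 ω - muX (X ω)) * (1 - D ω) * pX (X ω) /
            ((1 - pX (X ω)) * (μ {ω | D ω = 1}).toReal)) ∂μ) =
        ∫ ω, muYX (Y0 ω, X ω) ∂(μ[|{ω | D ω = 1}]) -
        ∫ ω, muX (X ω) ∂(μ[|{ω | D ω = 1}])) := by
  set S : Set Ω := {ω | D ω = 1} with hS_def
  have hS : MeasurableSet S := hDmeas (measurableSet_singleton 1)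
  set c : ℝ := (μ S).toReal with hc_def
  -- part (i), general form
  have key_i : ∀ φ : Ω → ℝ,
      (∫ ω, φ ω * D ω ∂μ) / c = ∫ ω, φ ω ∂(μ[|S]) := by
    intro φ
    have eInd : ∀ ω, φ ω * D ω = S.indicator φ ω := by
      intro ω
      rcases hDbin ω with h0 | h1
      · have : ω ∉ S := by simp [hS_def, h0]
        rw [Set.indicator_of_notMem this, h0, mul_zero]
      · have : ω ∈ S := h1
        rw [Set.indicator_of_mem this, h1, mul_one]
    rw [integral_congr_ae (Filter.Eventually.of_forall eInd), integral_indicator hS,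
      my_integral_cond μ S φ, ENNReal.toReal_inv, div_eq_inv_mul]
  have i1 := key_i (fun ω => muYX (Y0 ω, X ω))
  have i2 := key_i (fun ω => muX (X ω))
  -- measurability preliminaries
  have hπmeas : Measurable (fun ω => (Y0 ω, X ω)) := hY0meas.prodMk hXmeas
  have hm1 : MeasurableSpace.comap (fun ω => (Y0 ω, X ω)) inferInstance ≤
      (inferInstance : MeasurableSpace Ω) := measurable_iff_comap_le.mp hπmeas
  have hm2 : MeasurableSpace.comap X inferInstance ≤
      (inferInstance : MeasurableSpace Ω) := measurable_iff_comap_le.mp hXmeas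
  have hπ1 : Measurable[MeasurableSpace.comap (fun ω => (Y0 ω, X ω)) inferInstance]
      (fun ω => (Y0 ω, X ω)) := measurable_iff_comap_le.mpr le_rfl
  have hπ2 : Measurable[MeasurableSpace.comap X inferInstance] X :=
    measurable_iff_comap_le.mpr le_rfl
  -- part (ii)
  have z1 : ∫ ω, (Y1 ω - Y0 ω - muYX (Y0 ω, X ω)) * (1 - D ω) *
      pYX (Y0 ω, X ω) / (1 - pYX (Y0 ω, X ω)) ∂μ = 0 :=
    my_part_ii hm1 μ D hDmeas hDbin hD1lt
      (fun ω => Y1 ω - Y0 ω) (fun ω => muYX (Y0 ω, X ω)) (fun ω => pYX (Y0 ω, X ω))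
      (hmuYXmeas.comp hπ1) (hpYXmeas.comp hπ1)
      hmuYX (hY1int.sub hY0int) hint5
  have z2 : ∫ ω, (Y1 ω - Y0 ω - muX (X ω)) * (1 - D ω) *
      pX (X ω) / (1 - pX (X ω)) ∂μ = 0 :=
    my_part_ii hm2 μ D hDmeas hDbin hD1lt
      (fun ω => Y1 ω - Y0 ω) (fun ω => muX (X ω)) (fun ω => pX (X ω))
      (hmuXmeas.comp hπ2) (hpXmeas.comp hπ2)
      hmuX (hY1int.sub hY0int) hint6
  refine ⟨i1, i2, z1, z2, ?_⟩
  -- part (iii)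
  have split : ∀ (a b q : Ω → ℝ), Integrable a μ → Integrable (fun ω => b ω / q ω) μ →
      ∫ ω, (a ω / c + b ω / (q ω * c)) ∂μ
        = ((∫ ω, a ω ∂μ) + ∫ ω, b ω / q ω ∂μ) * c⁻¹ := by
    intro a b q ha hb
    have e : ∀ ω, a ω / c + b ω / (q ω * c) = (a ω + b ω / q ω) * c⁻¹ := by
      intro ω
      simp only [div_eq_mul_inv, mul_inv]
      ring
    rw [integral_congr_ae (Filter.Eventually.of_forall e), integral_mul_const,
      integral_add ha hb]
  have t1 := split (fun ω => muYX (Y0 ω, X ω) * D ω)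
    (fun ω => (Y1 ω - Y0 ω - muYX (Y0 ω, X ω)) * (1 - D ω) * pYX (Y0 ω, X ω))
    (fun ω => 1 - pYX (Y0 ω, X ω)) hint1 hint5
  have t2 := split (fun ω => muX (X ω) * D ω)
    (fun ω => (Y1 ω - Y0 ω - muX (X ω)) * (1 - D ω) * pX (X ω))
    (fun ω => 1 - pX (X ω)) hint2 hint6
  rw [t1, t2, z1, z2, add_zero, add_zero, ← div_eq_mul_inv, ← div_eq_mul_inv, i1, i2]
end
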